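/- With K_n as above, the Fourier transform K̂_n satisfies 0 ≤ K̂_n(v) ≤ K̂_n(0) for all real v, and K̂_n is monotonically decreasing on [0, ∞). -/

import Mathlib

open MeasureTheory Complex Real FourierTransform
open scoped Convolution

noncomputable section KFM

namespace KFM

variable (a : ℝ)

/-- box function: indicator of `[-a, a]`. -/
def box : ℝ → ℝ := Set.indicator (Set.Icc (-a) a) 1

/-- iterated convolutions of the box function: `iter a k = box^{*(k+1)}`. -/
def iter : ℕ → ℝ → ℝ
  | 0 => box a
  | k + 1 => (iter k) ⋆[ContinuousLinearMap.mul ℝ ℝ] (box a)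

variable {a}

lemma box_nonneg (x : ℝ) : 0 ≤ box a x := by
  unfold box
  by_cases h : x ∈ Set.Icc (-a) a <;> simp [Set.indicator_apply, h]

lemma box_even (x : ℝ) : box a (-x) = box a x := by
  unfold box
  have : -x ∈ Set.Icc (-a) a ↔ x ∈ Set.Icc (-a) a := by
    simp [Set.mem_Icc]; constructor <;> intro h <;> exact ⟨by linarith [h.2], by linarith [h.1]⟩
  by_cases h : x ∈ Set.Icc (-a) a <;> simp [Set.indicator_apply, h, this]

lemma box_anti : AntitoneOn (box a) (Set.Ici 0) := by
  intro x hx y hy hxy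
  unfold box
  by_cases h : y ∈ Set.Icc (-a) a
  · simp only [Set.mem_Icc] at h
    simp only [Set.mem_Ici] at hx
    have hx' : x ∈ Set.Icc (-a) a := ⟨by linarith [h.1], le_trans hxy h.2⟩
    simp [Set.indicator_apply, h.1, h.2, hx'.1, hx'.2]
  · simp only [Set.indicator_apply, Set.mem_Icc, h, if_false]
    split_ifs <;> norm_num

lemma box_integrable (ha : 0 < a) : Integrable (box a) := by
  unfold box
  rw [integrable_indicator_iff measurableSet_Icc]
  exact (integrableOn_const_iff).2 (Or.inr (by simp [Real.volume_Icc]))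

lemma box_le_one (x : ℝ) : box a x ≤ 1 := by
  unfold box
  by_cases h : x ∈ Set.Icc (-a) a <;> simp [Set.indicator_apply, h]


lemma conv_box_eq (ha : 0 < a) (h : ℝ → ℝ) (v : ℝ) :
    (h ⋆[ContinuousLinearMap.mul ℝ ℝ] box a) v = ∫ t in (v - a)..(v + a), h t := by
  rw [convolution_def]
  have key : ∀ t : ℝ, h t * box a (v - t) = Set.indicator (Set.Icc (v - a) (v + a)) h t := by
    intro t
    simp only [box, Set.indicator_apply, Set.mem_Icc]
    have : (-a ≤ v - t ∧ v - t ≤ a) ↔ (v - a ≤ t ∧ t ≤ v + a) := by constructor <;> (intro hh; constructor <;> linarith [hh.1, hh.2])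
    simp only [Pi.one_apply, mul_ite, mul_one, mul_zero]
    by_cases hc : v - a ≤ t ∧ t ≤ v + a
    · rw [if_pos (this.2 hc), if_pos hc]
    · rw [if_neg (fun hh => hc (this.1 hh)), if_neg hc]
  simp only [ContinuousLinearMap.mul_apply']
  rw [MeasureTheory.integral_congr_ae (Filter.Eventually.of_forall key),
    MeasureTheory.integral_indicator measurableSet_Icc,
    MeasureTheory.integral_Icc_eq_integral_Ioc,
    ← intervalIntegral.integral_of_le (by linarith)]

lemma step_nonneg (ha : 0 < a) {h : ℝ → ℝ} (hnn : ∀ x, 0 ≤ h x) (v : ℝ) :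
    0 ≤ ∫ t in (v - a)..(v + a), h t :=
  intervalIntegral.integral_nonneg (by linarith) (fun u _ => hnn u)

lemma step_even {h : ℝ → ℝ} (hev : ∀ x, h (-x) = h x) (v : ℝ) :
    (∫ t in (-v - a)..(-v + a), h t) = ∫ t in (v - a)..(v + a), h t := by
  have h1 : (∫ t in (v - a)..(v + a), h t) = ∫ t in (v - a)..(v + a), h (-t) :=
    (intervalIntegral.integral_congr (fun t _ => (hev t).symm))
  rw [h1, intervalIntegral.integral_comp_neg]
  congr 1 <;> ring

lemma step_anti (ha : 0 < a) {h : ℝ → ℝ} (hint : Integrable h) (hnn : ∀ x, 0 ≤ h x)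
    (hev : ∀ x, h (-x) = h x) (hanti : AntitoneOn h (Set.Ici 0)) :
    AntitoneOn (fun v => ∫ t in (v - a)..(v + a), h t) (Set.Ici 0) := by
  intro v hv w hw hvw
  simp only [Set.mem_Ici] at hv hw
  have hi : ∀ p q : ℝ, IntervalIntegrable h volume p q := fun p q => hint.intervalIntegrable
  -- ∫_{v-a}^{v+a} - ∫_{w-a}^{w+a} = ∫_{v-a}^{w-a} - ∫_{v+a}^{w+a} ≥ 0
  have key : (∫ t in (v + a)..(w + a), h t) ≤ ∫ t in (v - a)..(w - a), h t := by
    have comp : (∫ t in (v + a)..(w + a), h t) = ∫ t in (v - a)..(w - a), h (t + 2 * a) := by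
      rw [intervalIntegral.integral_comp_add_right]
      congr 1 <;> ring
    rw [comp]
    apply intervalIntegral.integral_mono_on (by linarith) ((hint.comp_add_right (2 * a)).intervalIntegrable) (hi _ _)
    intro t ht
    rcases Set.mem_Icc.1 ht with ⟨ht1, ht2⟩
    have h2a : |t| ≤ t + 2 * a := by
      rcases abs_cases t with ⟨he, _⟩ | ⟨he, _⟩ <;> rw [he] <;> linarith
    have habs : h t = h |t| := by
      rcases abs_cases t with ⟨he, _⟩ | ⟨he, _⟩ <;> rw [he]
      exact (hev t).symm
    rw [habs]
    exact hanti (Set.mem_Ici.2 (abs_nonneg t)) (Set.mem_Ici.2 (le_trans (abs_nonneg t) h2a)) h2a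
  have split1 : (∫ t in (v - a)..(w + a), h t) = (∫ t in (v - a)..(v + a), h t) + ∫ t in (v + a)..(w + a), h t :=
    (intervalIntegral.integral_add_adjacent_intervals (hi _ _) (hi _ _)).symm
  have split2 : (∫ t in (v - a)..(w + a), h t) = (∫ t in (v - a)..(w - a), h t) + ∫ t in (w - a)..(w + a), h t :=
    (intervalIntegral.integral_add_adjacent_intervals (hi _ _) (hi _ _)).symm
  simp only
  linarith [key, split1.symm.trans split2]

lemma step_cont {h : ℝ → ℝ} (hint : Integrable h) :
    Continuous (fun v => ∫ t in (v - a)..(v + a), h t) := by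
  have hi : ∀ p q : ℝ, IntervalIntegrable h volume p q := fun p q => hint.intervalIntegrable
  have key : ∀ v : ℝ, (∫ t in (v - a)..(v + a), h t)
      = (∫ t in (0:ℝ)..(v + a), h t) - ∫ t in (0:ℝ)..(v - a), h t := by
    intro v
    rw [intervalIntegral.integral_interval_sub_left (hi _ _) (hi _ _)]
  simp only [key]
  exact ((hint.continuous_primitive 0).comp (continuous_id.add continuous_const)).sub
    ((hint.continuous_primitive 0).comp (continuous_id.sub continuous_const))

lemma iter_integrable (ha : 0 < a) : ∀ k, Integrable (iter a k)
  | 0 => box_integrable ha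
  | (k+1) => (iter_integrable ha k).integrable_convolution _ (box_integrable ha)

lemma iter_nonneg (ha : 0 < a) : ∀ k, ∀ x, 0 ≤ iter a k x
  | 0, x => box_nonneg x
  | (k+1), x => by
      rw [iter, conv_box_eq ha]
      exact step_nonneg ha (iter_nonneg ha k) x

lemma iter_even (ha : 0 < a) : ∀ k, ∀ x, iter a k (-x) = iter a k x
  | 0, x => box_even x
  | (k+1), x => by
      simp only [iter, conv_box_eq ha]
      exact step_even (iter_even ha k) x

lemma iter_anti (ha : 0 < a) : ∀ k, AntitoneOn (iter a k) (Set.Ici 0)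
  | 0 => box_anti
  | (k+1) => by
      have : iter a (k+1) = fun v => ∫ t in (v - a)..(v + a), iter a k t := by
        funext v; rw [iter, conv_box_eq ha]
      rw [this]
      exact step_anti ha (iter_integrable ha k) (iter_nonneg ha k) (iter_even ha k)
        (iter_anti ha k)

lemma iter_cont (ha : 0 < a) (k : ℕ) : Continuous (iter a (k+1)) := by
  have : iter a (k+1) = fun v => ∫ t in (v - a)..(v + a), iter a k t := by
    funext v; rw [iter, conv_box_eq ha]
  rw [this]
  exact step_cont (iter_integrable ha k)

lemma iter_le_zero (ha : 0 < a) (k : ℕ) (x : ℝ) : iter a k x ≤ iter a k 0 := by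
  have habs : iter a k x = iter a k |x| := by
    rcases abs_cases x with ⟨he, _⟩ | ⟨he, _⟩ <;> rw [he]
    exact (iter_even ha k x).symm
  rw [habs]
  exact iter_anti ha k (Set.mem_Ici.2 le_rfl) (Set.mem_Ici.2 (abs_nonneg x)) (abs_nonneg x)


/-- complex-valued box. -/
def boxC (a : ℝ) : ℝ → ℂ := fun x => ((box a x : ℝ) : ℂ)

/-- complex-valued iterated convolution. -/
def iterC (a : ℝ) (k : ℕ) : ℝ → ℂ := fun x => ((iter a k x : ℝ) : ℂ)

lemma boxC_integrable (ha : 0 < a) : Integrable (boxC a) := (box_integrable ha).ofReal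

lemma iterC_integrable (ha : 0 < a) (k : ℕ) : Integrable (iterC a k) :=
  (iter_integrable ha k).ofReal

/-- Fourier transform of a convolution of integrable functions. -/
lemma fourier_conv {f g : ℝ → ℂ} (hf : Integrable f) (hg : Integrable g) (w : ℝ) :
    𝓕 (f ⋆[ContinuousLinearMap.mul ℂ ℂ] g) w = 𝓕 f w * 𝓕 g w := by
  have key : ∀ x : ℝ, 𝐞 (-(x * w)) • (f ⋆[ContinuousLinearMap.mul ℂ ℂ] g) x
      = ((fun t => 𝐞 (-(t * w)) • f t) ⋆[ContinuousLinearMap.mul ℂ ℂ]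
          (fun t => 𝐞 (-(t * w)) • g t)) x := by
    intro x
    rw [convolution_def, convolution_def, Circle.smul_def, ← MeasureTheory.integral_smul]
    congr 1; funext t
    simp only [ContinuousLinearMap.mul_apply', Circle.smul_def, smul_eq_mul]
    have hadd : (-(x * w)) = (-(t * w)) + (-((x - t) * w)) := by ring
    rw [hadd, AddChar.map_add_eq_mul]
    push_cast
    ring
  have hF : Integrable (fun t => 𝐞 (-(t * w)) • f t) :=
    by simpa [mul_comm] using (Real.fourierIntegral_convergent_iff w).2 hf
  have hG : Integrable (fun t => 𝐞 (-(t * w)) • g t) :=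
    by simpa [mul_comm] using (Real.fourierIntegral_convergent_iff w).2 hg
  calc 𝓕 (f ⋆[ContinuousLinearMap.mul ℂ ℂ] g) w
      = ∫ x, 𝐞 (-(x * w)) • (f ⋆[ContinuousLinearMap.mul ℂ ℂ] g) x :=
        Real.fourier_real_eq _ w
    _ = ∫ x, ((fun t => 𝐞 (-(t * w)) • f t) ⋆[ContinuousLinearMap.mul ℂ ℂ]
          (fun t => 𝐞 (-(t * w)) • g t)) x := by
        exact MeasureTheory.integral_congr_ae (Filter.Eventually.of_forall key)
    _ = (∫ t, 𝐞 (-(t * w)) • f t) * ∫ t, 𝐞 (-(t * w)) • g t := by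
        simpa using MeasureTheory.integral_convolution (ContinuousLinearMap.mul ℂ ℂ) hF hG
    _ = 𝓕 f w * 𝓕 g w := by rw [Real.fourier_real_eq, Real.fourier_real_eq]

lemma iterC_succ (k : ℕ) (x : ℝ) :
    iterC a (k+1) x = ((iterC a k) ⋆[ContinuousLinearMap.mul ℂ ℂ] (boxC a)) x := by
  calc iterC a (k+1) x = ((∫ t, iter a k t * box a (x - t) : ℝ) : ℂ) := by
        simp only [iterC, iter, convolution_def, ContinuousLinearMap.mul_apply']
    _ = ∫ t, ((iter a k t * box a (x - t) : ℝ) : ℂ) := (integral_ofReal).symm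
    _ = ((iterC a k) ⋆[ContinuousLinearMap.mul ℂ ℂ] (boxC a)) x := by
        simp only [convolution_def, ContinuousLinearMap.mul_apply', iterC, boxC]
        push_cast
        rfl

lemma ft_iter (ha : 0 < a) (k : ℕ) (w : ℝ) :
    𝓕 (iterC a k) w = (𝓕 (boxC a) w) ^ (k + 1) := by
  induction k with
  | zero => rw [pow_one]; rfl
  | succ k ih =>
      have : iterC a (k+1) = (iterC a k) ⋆[ContinuousLinearMap.mul ℂ ℂ] (boxC a) := by
        funext x; exact iterC_succ k x
      rw [this, fourier_conv (iterC_integrable ha k) (boxC_integrable ha) w, ih]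
      ring


lemma box_integral (ha : 0 < a) : (∫ v, box a v) = 2 * a := by
  unfold box
  rw [MeasureTheory.integral_indicator measurableSet_Icc]
  simp only [Pi.one_apply, MeasureTheory.setIntegral_const, smul_eq_mul, mul_one]
  rw [Real.volume_real_Icc_of_le (by linarith)]
  ring

open intervalIntegral in
lemma ft_box (ha : 0 < a) (u : ℝ) (hu : u ≠ 0) :
    𝓕 (boxC a) (u / (2 * π)) = ((2 * Real.sin (a * u) / u : ℝ) : ℂ) := by
  have hπ : (π : ℝ) ≠ 0 := Real.pi_ne_zero
  have key : ∀ v : ℝ, 𝐞 (-(v * (u / (2 * π)))) • boxC a v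
      = Set.indicator (Set.Icc (-a) a)
          (fun v : ℝ => Complex.exp ((-(u : ℂ) * Complex.I) * (v : ℝ))) v := by
    intro v
    rw [Circle.smul_def, Real.fourierChar_apply]
    by_cases h : v ∈ Set.Icc (-a) a
    · rw [Set.indicator_of_mem h]
      simp only [boxC, box, Set.indicator_of_mem h, Pi.one_apply, Complex.ofReal_one, mul_one,
        smul_eq_mul]
      congr 1
      have : 2 * π * -(v * (u / (2 * π))) = -u * v := by field_simp
      rw [this]
      push_cast
      ring
    · rw [Set.indicator_of_notMem h]
      simp [boxC, box, Set.indicator_of_notMem h]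
  rw [Real.fourier_real_eq,
    MeasureTheory.integral_congr_ae (Filter.Eventually.of_forall key),
    MeasureTheory.integral_indicator measurableSet_Icc,
    MeasureTheory.integral_Icc_eq_integral_Ioc,
    ← integral_of_le (by linarith : -a ≤ a),
    integral_exp_mul_complex (by
      simp [Complex.ext_iff, hu] : (-(u:ℂ) * Complex.I) ≠ 0)]
  have hu' : (u : ℂ) ≠ 0 := Complex.ofReal_ne_zero.2 hu
  rw [show ((2 * Real.sin (a * u) / u : ℝ) : ℂ)
      = 2 * Complex.sin ((a : ℂ) * (u : ℂ)) / (u : ℂ) by push_cast; ring]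
  rw [Complex.sin]
  field_simp [Complex.I_ne_zero]
  ring_nf
  simp [Complex.I_sq]


lemma boxC_norm (x : ℝ) : ‖boxC a x‖ = box a x := by
  rw [boxC, Complex.norm_real, Real.norm_eq_abs, _root_.abs_of_nonneg (box_nonneg x)]

lemma ft_box_cont (ha : 0 < a) : Continuous (𝓕 (boxC a)) :=
  VectorFourier.fourierIntegral_continuous Real.continuous_fourierChar
    (by exact continuous_inner) (boxC_integrable ha)

lemma ft_box_bound (ha : 0 < a) (w : ℝ) : ‖𝓕 (boxC a) w‖ ≤ 2 * a := by
  rw [Real.fourier_real_eq]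
  calc ‖∫ v, 𝐞 (-(v * w)) • boxC a v‖ ≤ ∫ v, ‖𝐞 (-(v * w)) • boxC a v‖ :=
        MeasureTheory.norm_integral_le_integral_norm _
    _ = ∫ v, box a v := by
        congr 1; funext v; rw [Circle.norm_smul, boxC_norm]
    _ = 2 * a := box_integral ha

lemma ft_box_decay (ha : 0 < a) (w : ℝ) (hw : w ≠ 0) :
    ‖𝓕 (boxC a) w‖ ≤ 1 / (π * |w|) := by
  have hπ : (0:ℝ) < π := Real.pi_pos
  have hu : (2 * π * w) ≠ 0 := by
    have : (2 * π : ℝ) ≠ 0 := by positivity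
    exact mul_ne_zero this hw
  have hval := ft_box ha (2 * π * w) hu
  rw [show (2 * π * w) / (2 * π) = w by field_simp] at hval
  rw [hval, Complex.norm_real, Real.norm_eq_abs]
  rw [abs_div, abs_mul]
  have h1 : |Real.sin (a * (2 * π * w))| ≤ 1 := Real.abs_sin_le_one _
  have h2 : |(2:ℝ)| = 2 := by norm_num
  have h3 : |2 * π * w| = 2 * π * |w| := by
    rw [abs_mul, abs_of_pos (by positivity : (0:ℝ) < 2 * π)]
  rw [h2, h3]
  rw [div_le_div_iff₀ (by positivity) (by positivity)]
  calc 2 * |Real.sin (a * (2 * π * w))| * (π * |w|) ≤ 2 * 1 * (π * |w|) := by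
        apply mul_le_mul_of_nonneg_right (by linarith [h1]) (by positivity)
    _ ≤ 1 * (2 * π * |w|) := by ring_nf; exact le_rfl


lemma ft_pow_integrable (ha : 0 < a) (N : ℕ) (hN : 2 ≤ N) :
    Integrable (fun w => (𝓕 (boxC a) w) ^ N) := by
  set C : ℝ := 2 * max ((2 * a) ^ N) 1 with hC
  have hC1 : (1:ℝ) ≤ max ((2 * a) ^ N) 1 := le_max_right _ _
  have hπ : (1:ℝ) ≤ π := by linarith [Real.pi_gt_three]
  have bound : ∀ w : ℝ, ‖(𝓕 (boxC a) w) ^ N‖ ≤ C * (1 + w ^ 2)⁻¹ := by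
    intro w
    rw [norm_pow]
    by_cases h : |w| ≤ 1
    · have h1 : ‖𝓕 (boxC a) w‖ ^ N ≤ (2 * a) ^ N :=
        pow_le_pow_left₀ (norm_nonneg _) (ft_box_bound ha w) N
      have h2 : w ^ 2 ≤ 1 := by
        calc w ^ 2 = |w| ^ 2 := (_root_.sq_abs w).symm
          _ ≤ 1 ^ 2 := pow_le_pow_left₀ (abs_nonneg w) h 2
          _ = 1 := one_pow 2
      have h3 : (2:ℝ)⁻¹ ≤ (1 + w ^ 2)⁻¹ := by
        apply inv_anti₀ (by positivity)
        linarith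
      calc ‖𝓕 (boxC a) w‖ ^ N ≤ (2 * a) ^ N := h1
        _ ≤ max ((2 * a) ^ N) 1 := le_max_left _ _
        _ = C * 2⁻¹ := by rw [hC]; ring
        _ ≤ C * (1 + w ^ 2)⁻¹ := by
            apply mul_le_mul_of_nonneg_left h3 (by positivity)
    · push_neg at h
      have hw : w ≠ 0 := by
        intro h0; rw [h0] at h; simp at h; linarith
      have h0 : (0:ℝ) < |w| := abs_pos.2 hw
      have h1 : ‖𝓕 (boxC a) w‖ ≤ |w|⁻¹ := by
        refine (ft_box_decay ha w hw).trans ?_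
        rw [one_div]
        apply inv_anti₀ h0
        nlinarith
      have h2 : ‖𝓕 (boxC a) w‖ ^ N ≤ (|w|⁻¹) ^ N :=
        pow_le_pow_left₀ (norm_nonneg _) h1 N
      have h3 : (|w|⁻¹) ^ N ≤ (|w|⁻¹) ^ 2 := by
        apply pow_le_pow_of_le_one (by positivity) _ hN
        rw [inv_le_one_iff₀]
        right; linarith
      have h4 : (|w|⁻¹) ^ 2 = (w ^ 2)⁻¹ := by
        rw [inv_pow, _root_.sq_abs]
      have hw2 : (1:ℝ) ≤ w ^ 2 := by nlinarith [_root_.sq_abs w, abs_nonneg w]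
      have h5 : (w ^ 2)⁻¹ ≤ 2 * (1 + w ^ 2)⁻¹ := by
        rw [show (2:ℝ) * (1 + w ^ 2)⁻¹ = 2 / (1 + w ^ 2) by ring, inv_eq_one_div,
          div_le_div_iff₀ (by positivity) (by positivity)]
        nlinarith
      have h6 : 2 * (1 + w ^ 2)⁻¹ ≤ C * (1 + w ^ 2)⁻¹ := by
        apply mul_le_mul_of_nonneg_right _ (by positivity)
        rw [hC]; nlinarith
      calc ‖𝓕 (boxC a) w‖ ^ N ≤ (|w|⁻¹) ^ N := h2
        _ ≤ (|w|⁻¹) ^ 2 := h3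
        _ = (w ^ 2)⁻¹ := h4
        _ ≤ 2 * (1 + w ^ 2)⁻¹ := h5
        _ ≤ C * (1 + w ^ 2)⁻¹ := h6
  have meas : AEStronglyMeasurable (fun w => (𝓕 (boxC a) w) ^ N) volume :=
    ((ft_box_cont ha).pow N).aestronglyMeasurable
  exact (integrable_inv_one_add_sq.const_mul C).mono' meas (Filter.Eventually.of_forall bound)


lemma key_formula (ha : 0 < a) (p : ℕ) (v : ℝ) :
    (∫ u : ℝ, ((Real.sin (a * u) ^ (2 * p + 2) / (a ^ (2 * p + 1) * u ^ (2 * p + 2)) : ℝ) : ℂ)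
        * Complex.exp (-((v : ℂ) * (u : ℂ)) * Complex.I))
      = (((2 * π) / (2 ^ (2 * p + 2) * a ^ (2 * p + 1)) * iter a (2 * p + 1) v : ℝ) : ℂ) := by
  have hπ : (0:ℝ) < π := Real.pi_pos
  set c : ℝ := 2 ^ (2 * p + 2) * a ^ (2 * p + 1) with hc
  have hcpos : (0:ℝ) < c := by rw [hc]; positivity
  set gC : ℝ → ℂ := iterC a (2 * p + 1) with hgC
  set Φ : ℝ → ℂ := fun u => 𝓕 gC (u / (2 * π)) * Complex.exp (-((v : ℂ) * (u : ℂ)) * Complex.I)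
    with hΦ
  -- Step 1: a.e. equality of integrands
  have h0 : ∀ᵐ u : ℝ, u ≠ 0 := by
    rw [MeasureTheory.ae_iff]
    have : {u : ℝ | ¬ u ≠ 0} = {0} := by ext u; simp
    rw [this]
    exact Real.volume_singleton
  have hae : ∀ᵐ u : ℝ,
      ((Real.sin (a * u) ^ (2 * p + 2) / (a ^ (2 * p + 1) * u ^ (2 * p + 2)) : ℝ) : ℂ)
        * Complex.exp (-((v : ℂ) * (u : ℂ)) * Complex.I) = ((c⁻¹ : ℝ) : ℂ) * Φ u := by
    filter_upwards [h0] with u hu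
    have hfg : 𝓕 gC (u / (2 * π)) = ((2 * Real.sin (a * u) / u : ℝ) : ℂ) ^ (2 * p + 2) := by
      rw [hgC, ft_iter ha (2 * p + 1), ft_box ha u hu]
    rw [hΦ]
    simp only
    rw [hfg, ← mul_assoc]
    congr 1
    have hreal : (Real.sin (a * u) ^ (2 * p + 2) / (a ^ (2 * p + 1) * u ^ (2 * p + 2)) : ℝ)
        = c⁻¹ * (2 * Real.sin (a * u) / u) ^ (2 * p + 2) := by
      rw [hc, div_pow, mul_pow]
      field_simp
    rw [hreal]
    push_cast
    ring
  rw [MeasureTheory.integral_congr_ae hae, MeasureTheory.integral_const_mul]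
  -- Step 2: substitution u = 2 π ξ
  have hsub : (∫ u, Φ u) = (2 * π) • ∫ ξ, Φ (2 * π * ξ) := by
    rw [MeasureTheory.Measure.integral_comp_mul_left Φ (2 * π), ← smul_assoc]
    rw [show ((2 * π) • |(2 * π)⁻¹| : ℝ) = 1 by
      rw [smul_eq_mul, abs_of_pos (by positivity : (0:ℝ) < (2 * π)⁻¹)]
      field_simp]
    rw [one_smul]
  -- Step 3: identify with the Fourier transform of 𝓕 gC
  have hΦval : ∀ ξ : ℝ, Φ (2 * π * ξ) = 𝐞 (-(ξ * v)) • 𝓕 gC ξ := by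
    intro ξ
    rw [hΦ]
    simp only
    rw [show (2 * π * ξ) / (2 * π) = ξ by field_simp]
    rw [Circle.smul_def, Real.fourierChar_apply, mul_comm]
    congr 1
    push_cast
    ring
  have hft : (∫ ξ, Φ (2 * π * ξ)) = 𝓕 (𝓕 gC) v := by
    rw [Real.fourier_real_eq]
    exact MeasureTheory.integral_congr_ae (Filter.Eventually.of_forall hΦval)
  -- Step 4: Fourier inversion
  have hint : Integrable gC := iterC_integrable ha (2 * p + 1)
  have hft_eq : 𝓕 gC = fun w => (𝓕 (boxC a) w) ^ (2 * p + 2) := by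
    funext w; exact ft_iter ha (2 * p + 1) w
  have hint' : Integrable (𝓕 gC) := by
    rw [hft_eq]; exact ft_pow_integrable ha (2 * p + 2) (by omega)
  have hcont : Continuous gC := by
    have : Continuous (iter a (2 * p + 1)) := iter_cont ha (2 * p)
    exact Complex.continuous_ofReal.comp this
  have hinv : 𝓕 (𝓕 gC) v = gC (-v) := by
    have h1 : 𝓕 (𝓕 gC) v = 𝓕⁻ (𝓕 gC) (-v) := by
      rw [Real.fourierInv_eq_fourier_neg, neg_neg]
    rw [h1]
    exact congrFun (hcont.fourierInv_fourier_eq hint hint') (-v)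
  rw [hsub, hft, hinv]
  rw [hgC]
  simp only [iterC]
  rw [iter_even ha (2 * p + 1) v, Complex.real_smul]
  push_cast
  ring

end KFM
end KFM

/-- The Fourier transform of `K_n` satisfies `0 ≤ K̂_n(v) ≤ K̂_n(0)` and is decreasing
on `[0, ∞)`. -/
theorem kernel_fourier_monotone (T ε : ℝ) (hT : 1 < T) (hε : 0 < ε) (n : ℕ) (hn : 1 ≤ n) :
    ∀ a K Khat, a = ε * Real.log T / n →
      K = (fun u : ℝ => Real.sin (a * u) ^ (2 * n) / (a ^ (2 * n - 1) * u ^ (2 * n))) →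
      Khat = (fun v : ℝ => (∫ u : ℝ, (K u : ℂ) * Complex.exp (-(v * u) * Complex.I)).re) →
      (∀ v, 0 ≤ Khat v ∧ Khat v ≤ Khat 0) ∧ AntitoneOn Khat (Set.Ici 0) := by
  intro a K Khat ha hK hKhat
  obtain ⟨p, rfl⟩ : ∃ p, n = p + 1 := ⟨n - 1, by omega⟩
  have hlog : 0 < Real.log T := Real.log_pos hT
  have ha0 : 0 < a := by
    rw [ha]
    positivity
  have hπ : (0:ℝ) < π := Real.pi_pos
  set coef : ℝ := (2 * π) / (2 ^ (2 * p + 2) * a ^ (2 * p + 1)) with hcoef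
  have hcoef0 : 0 < coef := by rw [hcoef]; positivity
  have hKval : ∀ v : ℝ, Khat v = coef * KFM.iter a (2 * p + 1) v := by
    intro v
    rw [hKhat]
    simp only [hK, show 2 * (p + 1) = 2 * p + 2 from by ring,
      show 2 * (p + 1) - 1 = 2 * p + 1 from by omega,
      show 2 * p + 2 - 1 = 2 * p + 1 from by omega]
    rw [KFM.key_formula ha0 p v, Complex.ofReal_re]
  constructor
  · intro v
    constructor
    · rw [hKval v]
      exact mul_nonneg hcoef0.le (KFM.iter_nonneg ha0 (2 * p + 1) v)
    · rw [hKval v, hKval 0]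
      exact mul_le_mul_of_nonneg_left (KFM.iter_le_zero ha0 (2 * p + 1) v) hcoef0.le
  · intro x hx y hy hxy
    rw [hKval x, hKval y]
    exact mul_le_mul_of_nonneg_left (KFM.iter_anti ha0 (2 * p + 1) hx hy hxy) hcoef0.le
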